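/- The distance Laplacian spectrum of the complete split graph CS_{t,n−t} (clique on t vertices joined completely to an independent set on n−t vertices) is { (2n−t) with multiplicity n−t−1, n with multiplicity t, 0 with multiplicity 1 }, and 2W(CS_{t,n−t}) = 2n(n−t−1) + t(t+1). -/

import Mathlib

open Finset Matrix BigOperators

variable {V : Type*} [Fintype V] [DecidableEq V]

/-- The transmission of a vertex: the sum of distances to all other vertices. -/
noncomputable def transmission (G : SimpleGraph V) (v : V) : ℕ := ∑ u, G.dist v u

/-- The distance matrix of a graph. -/
noncomputable def distMatrix (G : SimpleGraph V) : Matrix V V ℝ :=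
  fun u v => (G.dist u v : ℝ)

/-- The distance Laplacian matrix `Tr(G) - D(G)`. -/
noncomputable def distLap (G : SimpleGraph V) : Matrix V V ℝ :=
  Matrix.diagonal (fun v => (transmission G v : ℝ)) - distMatrix G

/-- The Wiener index of a graph. -/
noncomputable def wiener (G : SimpleGraph V) : ℝ := (∑ v, (transmission G v : ℝ)) / 2

/-- `ρ` lists the eigenvalues of the (Hermitian) matrix `M` in nonincreasing order. -/
def IsSpectrum {n : ℕ} (M : Matrix (Fin n) (Fin n) ℝ) (ρ : Fin n → ℝ) : Prop :=
  Antitone ρ ∧ ∃ (hM : M.IsHermitian) (e : Fin n ≃ Fin n), ∀ i, ρ i = hM.eigenvalues (e i)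

/-- Distance Laplacian energy, given the eigenvalue list `ρ`. -/
noncomputable def DLEnergy {n : ℕ} (G : SimpleGraph (Fin n)) (ρ : Fin n → ℝ) : ℝ :=
  ∑ i, |ρ i - 2 * wiener G / n|

/-- The graph has diameter two. -/
def diamTwo (G : SimpleGraph V) : Prop :=
  (∀ u v, G.dist u v ≤ 2) ∧ ∃ u v, G.dist u v = 2

/-- The multiset of eigenvalues of a Hermitian matrix. -/
noncomputable def eigMultiset (M : Matrix V V ℝ) (hM : M.IsHermitian) : Multiset ℝ :=
  Finset.univ.val.map hM.eigenvalues

/-- Complete split graph on `Fin n`: clique `{i : i < t}` joined to independent set. -/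
def completeSplit (n t : ℕ) : SimpleGraph (Fin n) :=
  SimpleGraph.fromRel (fun u v => (u : ℕ) < t ∨ (v : ℕ) < t)


section Aux
open Polynomial


-- general: similarity preserves charpoly
lemma charpoly_similar' {N R : Type*} [Fintype N] [DecidableEq N] [CommRing R]
    (P Q M : Matrix N N R) (h1 : P * Q = 1) :
    (P * M * Q).charpoly = M.charpoly := by
  have hmap : ∀ A B : Matrix N N R, (A * B).map (⇑(C : R →+* R[X])) = A.map C * B.map C :=
    fun A B => Matrix.map_mul
  have hcomm : ∀ A : Matrix N N R[X], Matrix.scalar N (X : R[X]) * A = A * Matrix.scalar N X :=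
    fun A => (Matrix.scalar_commute (X : R[X]) (fun r => Commute.all _ _) A).eq
  have hone : ((1 : Matrix N N R).map (C : R → R[X])) = 1 :=
    Matrix.map_one _ (map_zero C) (map_one C)
  have key : charmatrix (P * M * Q) = P.map C * charmatrix M * Q.map C := by
    unfold charmatrix
    simp only [RingHom.mapMatrix_apply]
    rw [Matrix.mul_sub, Matrix.sub_mul]
    congr 1
    · rw [← hcomm (P.map C), Matrix.mul_assoc, ← hmap P Q, h1, hone, Matrix.mul_one]
    · rw [← hmap, ← hmap]
  unfold Matrix.charpoly
  rw [key, Matrix.det_mul, Matrix.det_mul]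
  have : (P.map (C : R → R[X])).det * (Q.map C).det = 1 := by
    rw [← Matrix.det_mul, ← hmap, h1, hone, Matrix.det_one]
  calc (P.map (C : R → R[X])).det * (charmatrix M).det * (Q.map C).det
      = (charmatrix M).det * ((P.map C).det * (Q.map C).det) := by ring
    _ = (charmatrix M).det := by rw [this, mul_one]

lemma charpoly_diag' {m : ℕ} (d : Fin m → ℝ) :
    (Matrix.diagonal d).charpoly = ∏ i, (X - C (d i)) := by
  rw [Matrix.charpoly_of_upperTriangular _ (Matrix.blockTriangular_diagonal d)]
  simp

lemma roots_charpoly_diag {m : ℕ} (d : Fin m → ℝ) :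
    (Matrix.diagonal d).charpoly.roots = Finset.univ.val.map d := by
  rw [charpoly_diag']
  rw [Finset.prod_eq_multiset_prod]
  have : Multiset.map (fun i => X - C (d i)) univ.val
      = Multiset.map (fun a => X - C a) (Multiset.map d univ.val) := by
    rw [Multiset.map_map]; rfl
  rw [this]
  exact roots_multiset_prod_X_sub_C _




section
variable (n t : ℕ)

lemma cs_adj (u v : Fin n) :
    (completeSplit n t).Adj u v ↔ u ≠ v ∧ ((u : ℕ) < t ∨ (v : ℕ) < t) := by
  simp only [completeSplit, SimpleGraph.fromRel_adj]
  tauto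

lemma cs_dist (hn : t + 1 ≤ n) (ht : 1 ≤ t) (u v : Fin n) :
    (completeSplit n t).dist u v
      = if u = v then 0 else if (u : ℕ) < t ∨ (v : ℕ) < t then 1 else 2 := by
  rcases eq_or_ne u v with rfl | huv
  · simp
  rw [if_neg huv]
  by_cases hadj : (u : ℕ) < t ∨ (v : ℕ) < t
  · rw [if_pos hadj]
    exact SimpleGraph.dist_eq_one_iff_adj.mpr ((cs_adj n t u v).mpr ⟨huv, hadj⟩)
  · rw [if_neg hadj]
    push_neg at hadj
    set z : Fin n := ⟨0, by omega⟩ with hz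
    have hz0 : (z : ℕ) = 0 := rfl
    have hzu : (completeSplit n t).Adj u z := by
      refine (cs_adj n t u z).mpr ⟨?_, Or.inr (by omega)⟩
      intro h; rw [h] at hadj; omega
    have hzv : (completeSplit n t).Adj z v := by
      refine (cs_adj n t z v).mpr ⟨?_, Or.inl (by omega)⟩
      intro h; rw [← h] at hadj; omega
    let p : (completeSplit n t).Walk u v := SimpleGraph.Walk.cons hzu (SimpleGraph.Walk.cons hzv SimpleGraph.Walk.nil)
    have hle : (completeSplit n t).dist u v ≤ 2 := by
      have h2 := SimpleGraph.dist_le p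
      have h3 : p.length = 2 := rfl
      omega
    have hne0 : (completeSplit n t).dist u v ≠ 0 := by
      intro h
      rcases SimpleGraph.dist_eq_zero_iff_eq_or_not_reachable.mp h with h' | h'
      · exact huv h'
      · exact h' ⟨p⟩
    have hne1 : (completeSplit n t).dist u v ≠ 1 := by
      intro h
      have := SimpleGraph.dist_eq_one_iff_adj.mp h
      rw [cs_adj] at this
      omega
    omega

lemma cs_transmission_real (hn : t + 1 ≤ n) (ht : 1 ≤ t) (u : Fin n) :
    ((transmission (completeSplit n t) u : ℝ))
      = if (u : ℕ) < t then (n : ℝ) - 1 else 2 * n - t - 2 := by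
  have hcard : ((univ.filter fun v : Fin n => (v : ℕ) < t)).card = t := by
    have e : (univ.filter fun v : Fin n => (v : ℕ) < t)
        = Finset.attachFin (range t) (fun m hm => (mem_range.mp hm).trans_le (by omega)) := by
      ext v; simp [Finset.mem_attachFin]
    rw [e, Finset.card_attachFin, card_range]
  have hsum_ind : (∑ v : Fin n, (if (v : ℕ) < t then (1:ℝ) else 0)) = t := by
    rw [Finset.sum_ite, Finset.sum_const, Finset.sum_const]
    simp [hcard]
  have hsingle : ∀ (c : ℝ), (∑ v : Fin n, (if v = u then c else 0)) = c := by
    intro c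
    rw [Finset.sum_ite_eq' univ u (fun _ => c)]
    simp
  rw [transmission, Nat.cast_sum]
  by_cases hu : (u : ℕ) < t
  · rw [if_pos hu]
    have : ∀ v : Fin n, ((completeSplit n t).dist u v : ℝ) = 1 - (if v = u then 1 else 0) := by
      intro v
      rw [cs_dist n t hn ht]
      rcases eq_or_ne u v with rfl | h
      · simp
      · rw [if_neg h, if_pos (Or.inl hu), if_neg (Ne.symm h)]; norm_num
    rw [Finset.sum_congr rfl (fun v _ => this v)]
    rw [Finset.sum_sub_distrib, hsingle, Finset.sum_const, card_univ]
    simp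
  · rw [if_neg hu]
    have : ∀ v : Fin n, ((completeSplit n t).dist u v : ℝ)
        = 2 - (if (v : ℕ) < t then 1 else 0) - (if v = u then 2 else 0) := by
      intro v
      rw [cs_dist n t hn ht]
      rcases eq_or_ne u v with rfl | h
      · simp [hu]
      · rw [if_neg h, if_neg (Ne.symm h)]
        by_cases hv : (v : ℕ) < t
        · rw [if_pos (Or.inr hv), if_pos hv]; norm_num
        · rw [if_neg (by omega), if_neg hv]; norm_num
    rw [Finset.sum_congr rfl (fun v _ => this v)]
    rw [Finset.sum_sub_distrib, Finset.sum_sub_distrib, hsingle, hsum_ind,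
      Finset.sum_const, card_univ]
    simp; ring

end


/-- entries of the distance Laplacian, as a function on ℕ. -/
noncomputable def Mn (n t : ℕ) (u v : ℕ) : ℝ :=
  if v = u then (if u < t then (n:ℝ) - 1 else 2*n - t - 2)
  else -(if u < t ∨ v < t then 1 else 2)

noncomputable def colS (t : ℕ) (j : ℕ) : ℕ → ℝ := fun v =>
  if t ≤ v ∧ v ≤ t + j then 1 else if v = t + j + 1 then -((j:ℝ)+1) else 0
noncomputable def colV (n t : ℕ) : ℕ → ℝ := fun v => if v < t then (n : ℝ) - t else -(t:ℝ)
noncomputable def colW (m : ℕ) : ℕ → ℝ := fun v =>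
  if v < m then 1 else if v = m then -(m:ℝ) else 0

noncomputable def colN (n t : ℕ) (j : ℕ) : ℕ → ℝ :=
  if j < n-t-1 then colS t j
  else if j < n-1 then (if j = n-t-1 then colV n t else colW (j - (n-t-1)))
  else fun _ => 1

noncomputable def dN (n t : ℕ) (j : ℕ) : ℝ :=
  if j < n-t-1 then 2*(n:ℝ) - t else if j < n-1 then (n:ℝ) else 0

section
variable (n t : ℕ)

lemma sum_indicator_lt (L c : ℕ) (hc : c ≤ L) (x : ℕ → ℝ) :
    ∑ v ∈ range L, (if v < c then x v else 0) = ∑ v ∈ range c, x v := by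
  rw [← Finset.sum_filter]
  congr 1
  ext v; simp only [mem_filter, mem_range]; omega

lemma rowC (u : ℕ) (hu : u ∈ range n) (hut : u < t) (x : ℕ → ℝ) :
    ∑ v ∈ range n, Mn n t u v * x v = n * x u - ∑ v ∈ range n, x v := by
  have hpt : ∀ v, Mn n t u v * x v = (if v = u then (n:ℝ) * x v else 0) + (- x v) := by
    intro v
    unfold Mn
    by_cases h : v = u
    · subst h; rw [if_pos rfl, if_pos rfl, if_pos hut]; ring
    · rw [if_neg h, if_neg h, if_pos (Or.inl hut)]; ring
  rw [Finset.sum_congr rfl (fun v _ => hpt v), Finset.sum_add_distrib,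
    Finset.sum_ite_eq' (range n) u (fun v => (n:ℝ) * x v), if_pos hu, Finset.sum_neg_distrib]
  ring

lemma rowS (u : ℕ) (hu : u ∈ range n) (hut : t ≤ u) (x : ℕ → ℝ) (htn : t ≤ n) :
    ∑ v ∈ range n, Mn n t u v * x v
      = (2*(n:ℝ) - t) * x u + (∑ v ∈ range t, x v) - 2 * ∑ v ∈ range n, x v := by
  have hpt : ∀ v, Mn n t u v * x v
      = (if v = u then (2*(n:ℝ)-t) * x v else 0) + (if v < t then x v else 0) + (-2) * x v := by
    intro v
    unfold Mn
    by_cases h : v = u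
    · subst h
      rw [if_pos rfl, if_pos rfl, if_neg (by omega), if_neg (by omega)]; ring
    · rw [if_neg h, if_neg h]
      by_cases hv : v < t
      · rw [if_pos (Or.inr hv), if_pos hv]; ring
      · rw [if_neg (by omega), if_neg hv]; ring
  rw [Finset.sum_congr rfl (fun v _ => hpt v), Finset.sum_add_distrib, Finset.sum_add_distrib,
    Finset.sum_ite_eq' (range n) u (fun v => (2*(n:ℝ)-t) * x v), if_pos hu,
    sum_indicator_lt n t htn x, ← Finset.mul_sum]
  ring

-- column sums
lemma sum_colS (j : ℕ) (hj : j < n - t - 1) (hn : t + 1 ≤ n) :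
    ∑ v ∈ range n, colS t j v = 0 := by
  have hpt : ∀ v, colS t j v
      = (if t ≤ v ∧ v ≤ t + j then (1:ℝ) else 0) + (if v = t + j + 1 then -((j:ℝ)+1) else 0) := by
    intro v
    unfold colS
    by_cases h1 : t ≤ v ∧ v ≤ t + j
    · rw [if_pos h1, if_pos h1, if_neg (by omega)]; ring
    · rw [if_neg h1, if_neg h1]; ring
  rw [Finset.sum_congr rfl (fun v _ => hpt v), Finset.sum_add_distrib,
    Finset.sum_ite_eq' (range n) (t+j+1) (fun _ => -((j:ℝ)+1)), if_pos (by simp; omega)]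
  rw [Finset.sum_ite, Finset.sum_const, Finset.sum_const]
  have : ((range n).filter fun v => t ≤ v ∧ v ≤ t + j) = Finset.Ico t (t+j+1) := by
    ext v; simp only [mem_filter, mem_range, Finset.mem_Ico]; omega
  rw [this, Nat.card_Ico, show t + j + 1 - t = j + 1 from by omega]
  push_cast
  simp

lemma sum_colS_t (j : ℕ) : ∑ v ∈ range t, colS t j v = 0 := by
  apply Finset.sum_eq_zero
  intro v hv
  simp only [mem_range] at hv
  unfold colS
  rw [if_neg (by omega), if_neg (by omega)]

lemma sum_colW (m L : ℕ) (hm : m < L) : ∑ v ∈ range L, colW m v = 0 := by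
  have hpt : ∀ v, colW m v
      = (if v < m then (1:ℝ) else 0) + (if v = m then -(m:ℝ) else 0) := by
    intro v
    unfold colW
    by_cases h1 : v < m
    · rw [if_pos h1, if_pos h1, if_neg (by omega)]; ring
    · rw [if_neg h1, if_neg h1]; ring
  rw [Finset.sum_congr rfl (fun v _ => hpt v), Finset.sum_add_distrib,
    Finset.sum_ite_eq' (range L) m (fun _ => -(m:ℝ)), if_pos (by simpa using hm)]
  rw [Finset.sum_ite, Finset.sum_const, Finset.sum_const]
  have : ((range L).filter fun v => v < m) = range m := by
    ext v; simp only [mem_filter, mem_range]; omega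
  rw [this, card_range]
  simp

lemma sum_colV (hn : t + 1 ≤ n) : ∑ v ∈ range n, colV n t v = 0 := by
  have hpt : ∀ v, colV n t v = -(t:ℝ) + (if v < t then (n:ℝ) else 0) := by
    intro v
    unfold colV
    by_cases h1 : v < t
    · rw [if_pos h1, if_pos h1]; ring
    · rw [if_neg h1, if_neg h1]; ring
  rw [Finset.sum_congr rfl (fun v _ => hpt v), Finset.sum_add_distrib,
    sum_indicator_lt n t (by omega), Finset.sum_const, Finset.sum_const, card_range, card_range]
  simp
  ring

lemma sum_colV_t : ∑ v ∈ range t, colV n t v = t * ((n:ℝ) - t) := by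
  rw [Finset.sum_congr rfl (fun v hv => ?_), Finset.sum_const, card_range, nsmul_eq_mul]
  · unfold colV
    rw [if_pos (by simpa using hv)]

end
section
variable (n t : ℕ)

lemma key_eigen (hn : t + 1 ≤ n) (ht : 1 ≤ t) (j u : ℕ) (hj : j < n) (hu : u < n) :
    ∑ v ∈ range n, Mn n t u v * colN n t j v = dN n t j * colN n t j u := by
  have hu' : u ∈ range n := by simpa using hu
  by_cases h1 : j < n - t - 1
  · -- colS family
    rw [colN, if_pos h1, dN, if_pos h1]
    by_cases hut : u < t
    · rw [rowC n t u hu' hut, sum_colS n t j h1 hn]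
      have h0 : colS t j u = 0 := by
        unfold colS; rw [if_neg (by omega), if_neg (by omega)]
      rw [h0]; ring
    · rw [rowS n t u hu' (by omega) _ (by omega), sum_colS n t j h1 hn, sum_colS_t t j]
      ring
  · by_cases h2 : j < n - 1
    · rw [colN, if_neg h1, if_pos h2, dN, if_neg h1, if_pos h2]
      by_cases h3 : j = n - t - 1
      · rw [if_pos h3]
        by_cases hut : u < t
        · rw [rowC n t u hu' hut, sum_colV n t hn]
          ring
        · rw [rowS n t u hu' (by omega) _ (by omega), sum_colV n t hn, sum_colV_t n t]
          have h0 : colV n t u = -(t:ℝ) := by unfold colV; rw [if_neg (by omega)]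
          rw [h0]; ring
      · rw [if_neg h3]
        set m := j - (n - t - 1) with hm
        have hm1 : 1 ≤ m := by omega
        have hmt : m < t := by omega
        by_cases hut : u < t
        · rw [rowC n t u hu' hut, sum_colW m n (by omega)]
          ring
        · rw [rowS n t u hu' (by omega) _ (by omega), sum_colW m n (by omega),
            sum_colW m t (by omega)]
          have h0 : colW m u = 0 := by
            unfold colW; rw [if_neg (by omega), if_neg (by omega)]
          rw [h0]; ring
    · rw [colN, if_neg h1, if_neg h2, dN, if_neg h1, if_neg h2]
      have hsn : ∑ v ∈ range n, (1:ℝ) = n := by simp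
      have hst : ∑ v ∈ range t, (1:ℝ) = t := by simp
      by_cases hut : u < t
      · rw [rowC n t u hu' hut, hsn]; ring
      · rw [rowS n t u hu' (by omega) _ (by omega), hsn, hst]; ring

lemma ortho_colS (j k : ℕ) (hjk : j < k) (hk : k < n - t - 1) (hn : t + 1 ≤ n) :
    ∑ v ∈ range n, colS t j v * colS t k v = 0 := by
  have hpt : ∀ v, colS t j v * colS t k v = colS t j v := by
    intro v
    by_cases h1 : t ≤ v ∧ v ≤ t + j
    · have hk1 : colS t k v = 1 := by unfold colS; rw [if_pos (by omega)]
      rw [hk1, mul_one]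
    · by_cases h2 : v = t + j + 1
      · have hk1 : colS t k v = 1 := by unfold colS; rw [if_pos (by omega)]
        rw [hk1, mul_one]
      · have hj0 : colS t j v = 0 := by unfold colS; rw [if_neg h1, if_neg h2]
        rw [hj0, zero_mul]
  rw [Finset.sum_congr rfl (fun v _ => hpt v), sum_colS n t j (by omega) hn]

lemma ortho_colVW (m : ℕ) (hm1 : 1 ≤ m) (hmt : m < t) (hn : t + 1 ≤ n) :
    ∑ v ∈ range n, colV n t v * colW m v = 0 := by
  have hpt : ∀ v, colV n t v * colW m v = ((n:ℝ) - t) * colW m v := by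
    intro v
    by_cases h1 : v < m
    · have : colV n t v = (n:ℝ) - t := by unfold colV; rw [if_pos (by omega)]
      rw [this]
    · by_cases h2 : v = m
      · have : colV n t v = (n:ℝ) - t := by unfold colV; rw [if_pos (by omega)]
        rw [this]
      · have : colW m v = 0 := by unfold colW; rw [if_neg h1, if_neg h2]
        rw [this, mul_zero, mul_zero]
  rw [Finset.sum_congr rfl (fun v _ => hpt v), ← Finset.mul_sum, sum_colW m n (by omega),
    mul_zero]

lemma ortho_colW (m m' : ℕ) (hmm : m < m') (hm' : m' < n) :
    ∑ v ∈ range n, colW m v * colW m' v = 0 := by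
  have hpt : ∀ v, colW m v * colW m' v = colW m v := by
    intro v
    by_cases h1 : v < m
    · have : colW m' v = 1 := by unfold colW; rw [if_pos (by omega)]
      rw [this, mul_one]
    · by_cases h2 : v = m
      · have : colW m' v = 1 := by unfold colW; rw [if_pos (by omega)]
        rw [this, mul_one]
      · have : colW m v = 0 := by unfold colW; rw [if_neg h1, if_neg h2]
        rw [this, zero_mul]
  rw [Finset.sum_congr rfl (fun v _ => hpt v), sum_colW m n (by omega)]

lemma ortho_same (hn : t + 1 ≤ n) (ht : 1 ≤ t) (j k : ℕ) (hj : j < n) (hk : k < n)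
    (hjk : j ≠ k) (hd : dN n t j = dN n t k) :
    ∑ v ∈ range n, colN n t j v * colN n t k v = 0 := by
  -- distinct values of dN on the three blocks
  have htr : (1:ℝ) ≤ t := by exact_mod_cast ht
  have hnr : (t:ℝ) + 1 ≤ n := by exact_mod_cast hn
  -- symmetric reduction
  wlog hlt : j < k generalizing j k
  · rw [Finset.sum_congr rfl (fun v _ => mul_comm _ _)]
    exact this k j hk hj (Ne.symm hjk) hd.symm (by omega)
  -- same block analysis
  by_cases h1j : j < n - t - 1
  · have h1k : k < n - t - 1 := by
      by_contra hc
      rw [dN, if_pos h1j, dN, if_neg hc] at hd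
      by_cases h2 : k < n - 1
      · rw [if_pos h2] at hd; linarith
      · rw [if_neg h2] at hd; linarith
    rw [colN, if_pos h1j, colN, if_pos h1k]
    exact ortho_colS n t j k hlt h1k hn
  · have h1k : ¬ k < n - t - 1 := by omega
    by_cases h2j : j < n - 1
    · have h2k : k < n - 1 := by
        by_contra hc
        rw [dN, if_neg h1j, if_pos h2j, dN, if_neg h1k, if_neg hc] at hd
        linarith
      rw [colN, if_neg h1j, if_pos h2j, colN, if_neg h1k, if_pos h2k]
      by_cases h3 : j = n - t - 1
      · rw [if_pos h3, if_neg (by omega)]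
        exact ortho_colVW n t (k - (n-t-1)) (by omega) (by omega) hn
      · rw [if_neg h3, if_neg (by omega)]
        exact ortho_colW n (j - (n-t-1)) (k - (n-t-1)) (by omega) (by omega)
    · omega

lemma gram_diag_pos (hn : t + 1 ≤ n) (ht : 1 ≤ t) (j : ℕ) (hj : j < n) :
    0 < ∑ v ∈ range n, (colN n t j v)^2 := by
  have htr : (1:ℝ) ≤ t := by exact_mod_cast ht
  have hnr : (t:ℝ) + 1 ≤ n := by exact_mod_cast hn
  apply Finset.sum_pos' (fun v _ => sq_nonneg _)
  by_cases h1 : j < n - t - 1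
  · refine ⟨t, by simp; omega, ?_⟩
    rw [colN, if_pos h1]
    have : colS t j t = 1 := by unfold colS; rw [if_pos (by omega)]
    rw [this]; norm_num
  · by_cases h2 : j < n - 1
    · by_cases h3 : j = n - t - 1
      · refine ⟨0, by simp; omega, ?_⟩
        rw [colN, if_neg h1, if_pos h2, if_pos h3]
        have : colV n t 0 = (n:ℝ) - t := by unfold colV; rw [if_pos (by omega)]
        rw [this]
        have : (0:ℝ) < (n:ℝ) - t := by linarith
        positivity
      · refine ⟨0, by simp; omega, ?_⟩
        rw [colN, if_neg h1, if_pos h2, if_neg h3]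
        have : colW (j - (n-t-1)) 0 = 1 := by unfold colW; rw [if_pos (by omega)]
        rw [this]; norm_num
    · refine ⟨0, by simp; omega, ?_⟩
      rw [colN, if_neg h1, if_neg h2]
      norm_num

end
lemma card_filter_fin (n : ℕ) (p : ℕ → Prop) [DecidablePred p] :
    (univ.filter (fun j : Fin n => p j.val)).card = ((range n).filter p).card := by
  have e : (univ.filter (fun j : Fin n => p j.val))
      = Finset.attachFin ((range n).filter p)
        (fun m hm => mem_range.mp (Finset.mem_filter.mp hm).1) := by
    ext v
    simp [Finset.mem_attachFin, v.isLt]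
  rw [e, Finset.card_attachFin]

lemma count_dN (n t : ℕ) (hn : t + 1 ≤ n) (ht : 1 ≤ t) :
    (Finset.univ.val.map (fun j : Fin n => dN n t j.val))
      = Multiset.replicate (n - t - 1) (2 * (n : ℝ) - t)
        + Multiset.replicate t (n : ℝ) + {(0 : ℝ)} := by
  have htr : (1:ℝ) ≤ t := by exact_mod_cast ht
  have hnr : (t:ℝ) + 1 ≤ n := by exact_mod_cast hn
  have hne1 : 2*(n:ℝ) - t ≠ n := by intro h; linarith
  have hne2 : 2*(n:ℝ) - t ≠ 0 := by intro h; linarith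
  have hne3 : (n:ℝ) ≠ 0 := by intro h; linarith
  rw [Multiset.ext]
  intro b
  rw [Multiset.count_map]
  have e1 : Multiset.filter (fun a : Fin n => b = dN n t a.val) univ.val
      = (univ.filter (fun a : Fin n => b = dN n t a.val)).val := (Finset.filter_val _ _).symm
  rw [e1, ← Finset.card_def, card_filter_fin n (fun j => b = dN n t j)]
  rw [Multiset.count_add, Multiset.count_add, Multiset.count_replicate,
    Multiset.count_replicate, Multiset.count_singleton]
  by_cases hb1 : b = 2*(n:ℝ) - t
  · have e : ((range n).filter fun j => b = dN n t j) = range (n-t-1) := by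
      ext j
      simp only [mem_filter, mem_range]
      unfold dN
      constructor
      · rintro ⟨hjn, hbe⟩
        by_contra hc
        rw [if_neg hc] at hbe
        rw [hb1] at hbe
        split_ifs at hbe <;> linarith
      · intro hj
        exact ⟨by omega, by rw [if_pos hj, hb1]⟩
    subst hb1
    rw [e, card_range, if_pos rfl, if_neg (Ne.symm hne1), if_neg hne2]
    omega
  · by_cases hb2 : b = (n:ℝ)
    · have e : ((range n).filter fun j => b = dN n t j) = Finset.Ico (n-t-1) (n-1) := by
        ext j
        simp only [mem_filter, mem_range, Finset.mem_Ico]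
        unfold dN
        constructor
        · rintro ⟨hjn, hbe⟩
          rw [hb2] at hbe
          split_ifs at hbe with h1 h2
          · exfalso; exact hne1 (by linarith)
          · omega
          · exact absurd hbe hne3
        · rintro ⟨hj1, hj2⟩
          exact ⟨by omega, by rw [if_neg (by omega), if_pos hj2, hb2]⟩
      subst hb2
      rw [e, Nat.card_Ico, if_neg (fun h => hb1 h.symm), if_pos rfl, if_neg hne3]
      omega
    · by_cases hb3 : b = 0
      · have e : ((range n).filter fun j => b = dN n t j) = {n-1} := by
          ext j
          simp only [mem_filter, mem_range, Finset.mem_singleton]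
          unfold dN
          constructor
          · rintro ⟨hjn, hbe⟩
            rw [hb3] at hbe
            split_ifs at hbe with h1 h2
            · exact absurd hbe (Ne.symm hne2)
            · exact absurd hbe (Ne.symm hne3)
            · omega
          · intro hj
            refine ⟨by omega, ?_⟩
            rw [if_neg (by omega), if_neg (by omega), hb3]
        subst hb3
        rw [e, Finset.card_singleton, if_neg (fun h => hb1 h.symm),
          if_neg (fun h => hb2 h.symm), if_pos rfl]
      · have e : ((range n).filter fun j => b = dN n t j) = ∅ := by
          ext j
          simp only [mem_filter, mem_range, Finset.notMem_empty, iff_false, not_and]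
          intro hjn hbe
          unfold dN at hbe
          split_ifs at hbe <;> [exact hb1 hbe; exact hb2 hbe; exact hb3 hbe]
        rw [e, Finset.card_empty, if_neg (fun h => hb1 h.symm),
          if_neg (fun h => hb2 h.symm), if_neg hb3]

end Aux

theorem stmt14 (n t : ℕ) (ht1 : 1 ≤ t) (ht2 : t ≤ n - 1)
    (hM : (distLap (completeSplit n t)).IsHermitian) :
    eigMultiset _ hM =
      Multiset.replicate (n - t - 1) (2 * (n : ℝ) - t) +
        Multiset.replicate t (n : ℝ) + {(0 : ℝ)} ∧
      2 * wiener (completeSplit n t) =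
        2 * (n : ℝ) * ((n : ℝ) - t - 1) + t * ((t : ℝ) + 1) := by
  have hn2 : t + 1 ≤ n := by omega
  have htr : (1:ℝ) ≤ t := by exact_mod_cast ht1
  have hnr : (t:ℝ) + 1 ≤ n := by exact_mod_cast hn2
  set A := distLap (completeSplit n t) with hA
  -- entrywise description of A
  have hAe : ∀ u v : Fin n, A u v = Mn n t u.val v.val := by
    intro u v
    rw [hA]
    simp only [distLap, Matrix.sub_apply, Matrix.diagonal_apply, distMatrix, Mn]
    rcases eq_or_ne u v with rfl | huv
    · rw [if_pos rfl, if_pos rfl, cs_transmission_real n t hn2 ht1 u,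
        cs_dist n t hn2 ht1 u u, if_pos rfl]
      simp
    · rw [if_neg huv, if_neg (fun h => huv (Fin.val_injective h).symm),
        cs_dist n t hn2 ht1 u v, if_neg huv]
      by_cases hc : (u:ℕ) < t ∨ (v:ℕ) < t
      · rw [if_pos hc, if_pos hc]; norm_num
      · rw [if_neg hc, if_neg hc]; norm_num
  -- the eigenvector matrix
  set P : Matrix (Fin n) (Fin n) ℝ :=
    Matrix.of (fun v j : Fin n => colN n t j.val v.val) with hP
  set dF : Fin n → ℝ := fun j => dN n t j.val with hdF
  have hMP : A * P = P * Matrix.diagonal dF := by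
    ext u j
    rw [Matrix.mul_apply, Matrix.mul_diagonal]
    have hterm : ∀ v : Fin n, A u v * P v j = Mn n t u.val v.val * colN n t j.val v.val := by
      intro v; rw [hAe u v]; rfl
    rw [Finset.sum_congr rfl (fun v _ => hterm v),
      Fin.sum_univ_eq_sum_range (fun i => Mn n t u.val i * colN n t j.val i) n,
      key_eigen n t hn2 ht1 j.val u.val j.isLt u.isLt]
    exact mul_comm _ _
  have hAsym : A.transpose = A := by
    ext u v
    have h := congr_fun (congr_fun hM u) v
    simpa [Matrix.conjTranspose_apply] using h
  set g : Fin n → ℝ := fun j => ∑ v ∈ Finset.range n, (colN n t j.val v)^2 with hg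
  have hsum2 : ∀ (j k : Fin n), ∑ v : Fin n, P.transpose j v * P v k
      = ∑ v ∈ Finset.range n, colN n t j.val v * colN n t k.val v := by
    intro j k
    have : ∀ v : Fin n, P.transpose j v * P v k
        = colN n t j.val v.val * colN n t k.val v.val := fun v => rfl
    rw [Finset.sum_congr rfl (fun v _ => this v),
      Fin.sum_univ_eq_sum_range (fun i => colN n t j.val i * colN n t k.val i) n]
  have hGram : P.transpose * P = Matrix.diagonal g := by
    have hcomm : (P.transpose * P) * Matrix.diagonal dF
        = Matrix.diagonal dF * (P.transpose * P) := by
      calc P.transpose * P * Matrix.diagonal dF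
          = P.transpose * (P * Matrix.diagonal dF) := by rw [Matrix.mul_assoc]
        _ = P.transpose * (A * P) := by rw [hMP]
        _ = (P.transpose * A.transpose) * P := by rw [hAsym, Matrix.mul_assoc]
        _ = (A * P).transpose * P := by rw [Matrix.transpose_mul]
        _ = (P * Matrix.diagonal dF).transpose * P := by rw [hMP]
        _ = Matrix.diagonal dF * (P.transpose * P) := by
            rw [Matrix.transpose_mul, Matrix.diagonal_transpose, Matrix.mul_assoc]
    ext j k
    rw [Matrix.mul_apply, Matrix.diagonal_apply]
    rcases eq_or_ne j k with rfl | hjk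
    · rw [if_pos rfl, hsum2 j j, hg]
      exact Finset.sum_congr rfl (fun v _ => (pow_two _).symm)
    · rw [if_neg hjk]
      by_cases hd : dF j = dF k
      · rw [hsum2 j k]
        exact ortho_same n t hn2 ht1 j.val k.val j.isLt k.isLt
          (fun h => hjk (Fin.val_injective h)) hd
      · have hjk2 := congr_fun (congr_fun hcomm j) k
        have hl : ((P.transpose * P) * Matrix.diagonal dF) j k
            = (P.transpose * P) j k * dF k := Matrix.mul_diagonal _ _ _ _
        have hr : (Matrix.diagonal dF * (P.transpose * P)) j k
            = dF j * (P.transpose * P) j k := Matrix.diagonal_mul _ _ _ _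
        rw [hl, hr] at hjk2
        have h0 : (dF k - dF j) * ((P.transpose * P) j k) = 0 := by
          rw [sub_mul]; rw [mul_comm (dF j) _] at hjk2; linarith
        rcases mul_eq_zero.mp h0 with h | h
        · exact absurd (by linarith : dF j = dF k) hd
        · rw [Matrix.mul_apply] at h
          exact h
  have hdet : IsUnit P.det := by
    have hne : P.det * P.det ≠ 0 := by
      have hdg : P.transpose.det * P.det = (Matrix.diagonal g).det := by
        rw [← Matrix.det_mul, hGram]
      rw [Matrix.det_transpose] at hdg
      rw [hdg, Matrix.det_diagonal]
      exact Finset.prod_ne_zero_iff.mpr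
        (fun j _ => (gram_diag_pos n t hn2 ht1 j.val j.isLt).ne')
    exact isUnit_iff_ne_zero.mpr (fun h => hne (by rw [h, mul_zero]))
  have hPinv : P * P⁻¹ = 1 := Matrix.mul_nonsing_inv P hdet
  have hchar1 : A.charpoly = (Matrix.diagonal dF).charpoly := by
    have hAform : A = P * Matrix.diagonal dF * P⁻¹ := by
      calc A = A * (P * P⁻¹) := by rw [hPinv, Matrix.mul_one]
        _ = (A * P) * P⁻¹ := by rw [Matrix.mul_assoc]
        _ = P * Matrix.diagonal dF * P⁻¹ := by rw [hMP]
    rw [hAform]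
    exact charpoly_similar' P P⁻¹ _ hPinv
  have hchar2 : A.charpoly = (Matrix.diagonal hM.eigenvalues).charpoly := by
    set U : Matrix (Fin n) (Fin n) ℝ := (Matrix.IsHermitian.eigenvectorUnitary hM : Matrix (Fin n) (Fin n) ℝ) with hU
    have hUU : star U * U = 1 :=
      Matrix.mem_unitaryGroup_iff'.mp (Matrix.IsHermitian.eigenvectorUnitary hM).2
    have hspec : star U * A * U = Matrix.diagonal (RCLike.ofReal ∘ hM.eigenvalues) := by
      have h := hM.conjStarAlgAut_star_eigenvectorUnitary
      rwa [Unitary.conjStarAlgAut_star_apply] at h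
    have heq : (RCLike.ofReal ∘ hM.eigenvalues : Fin n → ℝ) = hM.eigenvalues := by
      funext i; simp [RCLike.ofReal_real_eq_id]
    calc A.charpoly = (star U * A * U).charpoly := (charpoly_similar' (star U) U A hUU).symm
      _ = (Matrix.diagonal hM.eigenvalues).charpoly := by rw [hspec, heq]
  constructor
  · have hroots : Finset.univ.val.map hM.eigenvalues = Finset.univ.val.map dF := by
      have r1 := roots_charpoly_diag hM.eigenvalues
      have r2 := roots_charpoly_diag dF
      rw [← r1, ← r2, ← hchar2, ← hchar1]
    show Finset.univ.val.map hM.eigenvalues = _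
    rw [hroots, hdF]
    exact count_dN n t hn2 ht1
  · rw [wiener,
      Finset.sum_congr rfl (fun u _ => cs_transmission_real n t hn2 ht1 u),
      Finset.sum_ite, Finset.sum_const, Finset.sum_const]
    have hcard1 : (Finset.univ.filter fun v : Fin n => (v : ℕ) < t).card = t := by
      rw [card_filter_fin n (fun v => v < t)]
      have : ((Finset.range n).filter fun v => v < t) = Finset.range t := by
        ext v; simp only [Finset.mem_filter, Finset.mem_range]; omega
      rw [this, Finset.card_range]
    have hcard2 : (Finset.univ.filter fun v : Fin n => ¬ (v : ℕ) < t).card = n - t := by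
      have h2 := Finset.card_filter_add_card_filter_not
        (s := (Finset.univ : Finset (Fin n))) (p := fun v : Fin n => (v : ℕ) < t)
      rw [hcard1] at h2
      simp only [Finset.card_univ, Fintype.card_fin] at h2
      omega
    rw [hcard1, hcard2, nsmul_eq_mul, nsmul_eq_mul, Nat.cast_sub (by omega : t ≤ n)]
    field_simp
    ring
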